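/- Conversely, for any acyclic set of arcs forming vertex-disjoint directed paths on {1,…,n}, there exist values u_i ∈ {0,1,…,n−1} satisfying the MTZ constraints u_j − u_i + n·x_{ij} ≤ n − 1 for all i ≠ j. -/

import Mathlib

open Finset

/-- Converse of MTZ: for any acyclic arc set forming vertex-disjoint directed paths
(in-degree and out-degree at most 1, no cycles) on `{1,…,n}`, there exist potentials
`u_i ∈ {0,…,n−1}` satisfying the MTZ constraints. -/
theorem mtz_feasible_of_paths (n : ℕ) (x : Fin n → Fin n → Bool)
    (hin : ∀ j : Fin n, (Finset.univ.filter (fun i => x i j = true)).card ≤ 1)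
    (hout : ∀ i : Fin n, (Finset.univ.filter (fun j => x i j = true)).card ≤ 1)
    (hacyclic : ¬ ∃ (k : ℕ) (c : Fin (k + 1) → Fin n), 0 < k ∧ c 0 = c (Fin.last k) ∧
        ∀ t : Fin k, c t.castSucc ≠ c t.succ ∧ x (c t.castSucc) (c t.succ) = true) :
    ∃ u : Fin n → ℕ, (∀ i, u i ≤ n - 1) ∧
      ∀ i j, i ≠ j →
        (u j : ℝ) - (u i : ℝ) + (n : ℝ) * (if x i j then 1 else 0) ≤ (n : ℝ) - 1 := by
  classical
  set step : Fin n → Fin n → Prop := fun a b => a ≠ b ∧ x a b = true with hstep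
  -- acyclicity in terms of transitive closure
  have key : ∀ a b : Fin n, step a b → ¬ Relation.ReflTransGen step b a := by
    intro a b hab hba
    obtain ⟨l, hchain, hlast⟩ := List.exists_isChain_cons_of_relationReflTransGen hba
    apply hacyclic
    set L : List (Fin n) := a :: b :: l with hL
    have hLlen : L.length = l.length + 2 := by simp [hL]
    have hchain' : List.IsChain step L := List.isChain_cons_cons.mpr ⟨hab, hchain⟩
    refine ⟨l.length + 1, fun t => L.get (Fin.cast hLlen.symm t), Nat.succ_pos _, ?_, ?_⟩
    · show L.get (Fin.cast hLlen.symm 0) = L.get (Fin.cast hLlen.symm (Fin.last (l.length + 1)))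
      have h1 : L.get (Fin.cast hLlen.symm 0) = a := by
        simp [hL]
      have h2 : L.get (Fin.cast hLlen.symm (Fin.last (l.length + 1)))
          = L.getLast (by simp [hL]) := by
        rw [List.getLast_eq_getElem, List.get_eq_getElem]
        congr 1
      rw [h1, h2]
      have : L.getLast (by simp [hL]) = (b :: l).getLast (by simp) := by
        simp only [hL]
        rw [List.getLast_cons]
      rw [this, hlast]
    · intro t
      have hth : (t : ℕ) < L.length - 1 := by
        have := t.isLt
        omega
      have hc0 := List.isChain_iff_getElem.mp hchain' (t : ℕ) (by omega)
      have hc : step (L.get (Fin.cast hLlen.symm t.castSucc))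
          (L.get (Fin.cast hLlen.symm t.succ)) := by
        convert hc0 using 2 <;> simp
      exact ⟨hc.1, hc.2⟩
  -- reachability sets
  set reach : Fin n → Finset (Fin n) :=
    fun i => Finset.univ.filter (fun j => Relation.ReflTransGen step i j) with hreach
  have hmem : ∀ i, i ∈ reach i := by
    intro i
    simp only [hreach, mem_filter, mem_univ, true_and]
    exact Relation.ReflTransGen.refl
  have hsub : ∀ i j, step i j → reach j ⊆ reach i := by
    intro i j hij k hk
    simp only [hreach, mem_filter, mem_univ, true_and] at hk ⊢
    exact Relation.ReflTransGen.head hij hk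
  have hcard : ∀ i j, step i j → (reach j).card + 1 ≤ (reach i).card := by
    intro i j hij
    have hni : i ∉ reach j := by
      simp only [hreach, mem_filter, mem_univ, true_and]
      exact key i j hij
    have : insert i (reach j) ⊆ reach i := by
      intro k hk
      rcases Finset.mem_insert.mp hk with rfl | hk
      · exact hmem k
      · exact hsub i j hij hk
    calc (reach j).card + 1 = (insert i (reach j)).card := by
          rw [Finset.card_insert_of_notMem hni]
      _ ≤ (reach i).card := Finset.card_le_card this
  have hcard_le : ∀ i, (reach i).card ≤ n := by
    intro i
    calc (reach i).card ≤ Finset.univ.card := Finset.card_le_card (Finset.subset_univ _)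
      _ = n := by simp
  have hcard_pos : ∀ i, 1 ≤ (reach i).card := by
    intro i
    exact Finset.card_pos.mpr ⟨i, hmem i⟩
  refine ⟨fun i => (reach i).card - 1, ?_, ?_⟩
  · intro i
    show (reach i).card - 1 ≤ n - 1
    have := hcard_le i
    omega
  · intro i j hij
    have hn1 : 1 ≤ n := i.pos
    by_cases hx : x i j = true
    · have hs : step i j := ⟨hij, hx⟩
      have h1 := hcard i j hs
      have h2 := hcard_pos j
      have h3 := hcard_pos i
      have hnat : ((reach j).card - 1) + 1 ≤ (reach i).card - 1 := by omega
      have hreal : ((((reach j).card - 1 : ℕ)) : ℝ) + 1 ≤ (((reach i).card - 1 : ℕ) : ℝ) := by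
        exact_mod_cast hnat
      simp only [hx, if_true]
      linarith
    · have hb : x i j = false := by simp [hx]
      have h1 : (reach j).card - 1 ≤ n - 1 := by have := hcard_le j; omega
      have hreal : ((((reach j).card - 1 : ℕ)) : ℝ) ≤ ((n - 1 : ℕ) : ℝ) := by
        exact_mod_cast h1
      have hcast : ((n - 1 : ℕ) : ℝ) = (n : ℝ) - 1 := by
        rw [Nat.cast_sub hn1]; simp
      have hnn : (0 : ℝ) ≤ (((reach i).card - 1 : ℕ) : ℝ) := Nat.cast_nonneg _
      simp only [hb, if_false]
      push_cast at *
      linarith
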